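/- arXiv:1008.1236 — 11 statements merged into one kernel-verified Lean document; each statement's English description precedes it below -/
import Mathlib

section
/- Let n ≥ 1 and let (n_1, c_1), …, (n_k, c_k) define a finite family of oriented hyperplanes in ℝ^n (each n_i a unit vector, c_i ∈ ℝ), and set v(P) = Σ_{i=1}^k (c_i − ⟪P, n_i⟫). If there exist n + 1 affinely independent points Q_0, …, Q_n in ℝ^n at which v takes the same value, then v is constant on ℝ^n (i.e., the family is Viviani). -/
open scoped RealInnerProductSpace

theorem viviani_of_affineIndependent_points (n k : ℕ) (hn : 1 ≤ n)
    (N : Fin k → EuclideanSpace ℝ (Fin n)) (c : Fin k → ℝ)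
    (hN : ∀ i, ‖N i‖ = 1)
    (Q : Fin (n + 1) → EuclideanSpace ℝ (Fin n))
    (hQ : AffineIndependent ℝ Q)
    (hv : ∀ a b : Fin (n + 1),
      (∑ i, (c i - ⟪Q a, N i⟫)) = (∑ i, (c i - ⟪Q b, N i⟫))) :
    ∀ P P' : EuclideanSpace ℝ (Fin n),
      (∑ i, (c i - ⟪P, N i⟫)) = (∑ i, (c i - ⟪P', N i⟫)) := by
  set s : EuclideanSpace ℝ (Fin n) := ∑ i, N i with hs
  have hsum : ∀ P : EuclideanSpace ℝ (Fin n), ∑ i, ⟪P, N i⟫ = ⟪P, s⟫ := by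
    intro P; rw [hs, inner_sum]
  have key : ∀ a b : Fin (n + 1), ⟪Q a - Q b, s⟫ = 0 := by
    intro a b
    have h := hv a b
    rw [Finset.sum_sub_distrib, Finset.sum_sub_distrib] at h
    have h2 : ∑ i, ⟪Q a, N i⟫ = ∑ i, ⟪Q b, N i⟫ := by linarith
    rw [hsum, hsum] at h2
    rw [inner_sub_left, h2, sub_self]
  have htop : vectorSpan ℝ (Set.range Q) = ⊤ := by
    apply hQ.vectorSpan_eq_top_of_card_eq_finrank_add_one
    simp [finrank_euclideanSpace]
  have hmem : s ∈ vectorSpan ℝ (Set.range Q) := htop ▸ Submodule.mem_top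
  rw [vectorSpan_def] at hmem
  have horth : ∀ x ∈ Submodule.span ℝ (Set.range Q -ᵥ Set.range Q), ⟪x, s⟫ = 0 := by
    intro x hx
    induction hx using Submodule.span_induction with
    | mem x hx =>
      obtain ⟨u, hu, v, hv', rfl⟩ := Set.mem_sub.mp hx
      obtain ⟨a, rfl⟩ := hu
      obtain ⟨b, rfl⟩ := hv'
      exact key a b
    | zero => simp
    | add x y _ _ hx hy => rw [inner_add_left, hx, hy, add_zero]
    | smul r x _ hx => rw [real_inner_smul_left, hx, mul_zero]
  have hs0 : s = 0 := inner_self_eq_zero.mp (horth s hmem)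
  intro P P'
  rw [Finset.sum_sub_distrib, Finset.sum_sub_distrib, hsum, hsum, hs0]
  simp
end

section
/- Let a, b, c be nonzero vectors in ℝ² with a + b + c = 0 (the edge vectors of a triangle, in cyclic order). Then a/‖a‖ + b/‖b‖ + c/‖c‖ = 0 if and only if ‖a‖ = ‖b‖ and ‖b‖ = ‖c‖. Consequently, a triangle is Viviani if and only if it is equilateral. -/
theorem viviani_triangle_iff_equilateral
    (a b c : EuclideanSpace ℝ (Fin 2))
    (ha : a ≠ 0) (hb : b ≠ 0) (hc : c ≠ 0)
    (hsum : a + b + c = 0) :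
    (‖a‖⁻¹ • a + ‖b‖⁻¹ • b + ‖c‖⁻¹ • c = 0) ↔ (‖a‖ = ‖b‖ ∧ ‖b‖ = ‖c‖) := by
  constructor
  · intro h
    have hA0 : (0:ℝ) < ‖a‖ := norm_pos_iff.mpr ha
    have hB0 : (0:ℝ) < ‖b‖ := norm_pos_iff.mpr hb
    have hC0 : (0:ℝ) < ‖c‖ := norm_pos_iff.mpr hc
    have cab := real_inner_comm c a
    have cba := real_inner_comm b a
    have ccb := real_inner_comm c b
    have E1 : ‖a‖^2 + @inner ℝ _ _ a b + @inner ℝ _ _ a c = 0 := by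
      have := congrArg (fun x => @inner ℝ _ _ a x) hsum
      simp only [inner_add_right, inner_zero_right] at this
      rw [real_inner_self_eq_norm_sq] at this
      linarith
    have E2 : @inner ℝ _ _ a b + ‖b‖^2 + @inner ℝ _ _ b c = 0 := by
      have := congrArg (fun x => @inner ℝ _ _ b x) hsum
      simp only [inner_add_right, inner_zero_right] at this
      rw [real_inner_self_eq_norm_sq] at this
      linarith
    have E3 : @inner ℝ _ _ a c + @inner ℝ _ _ b c + ‖c‖^2 = 0 := by
      have := congrArg (fun x => @inner ℝ _ _ c x) hsum
      simp only [inner_add_right, inner_zero_right] at this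
      rw [real_inner_self_eq_norm_sq] at this
      linarith
    have F1 : ‖a‖⁻¹ * ‖a‖^2 + ‖b‖⁻¹ * @inner ℝ _ _ a b + ‖c‖⁻¹ * @inner ℝ _ _ a c = 0 := by
      have := congrArg (fun x => @inner ℝ _ _ a x) h
      simp only [inner_add_right, real_inner_smul_right, inner_zero_right] at this
      rw [real_inner_self_eq_norm_sq] at this
      linarith
    have F2 : ‖a‖⁻¹ * @inner ℝ _ _ a b + ‖b‖⁻¹ * ‖b‖^2 + ‖c‖⁻¹ * @inner ℝ _ _ b c = 0 := by
      have := congrArg (fun x => @inner ℝ _ _ b x) h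
      simp only [inner_add_right, real_inner_smul_right, inner_zero_right] at this
      rw [real_inner_self_eq_norm_sq, real_inner_comm a b] at this
      linarith
    have F3 : ‖a‖⁻¹ * @inner ℝ _ _ a c + ‖b‖⁻¹ * @inner ℝ _ _ b c + ‖c‖⁻¹ * ‖c‖^2 = 0 := by
      have := congrArg (fun x => @inner ℝ _ _ c x) h
      simp only [inner_add_right, real_inner_smul_right, inner_zero_right] at this
      rw [real_inner_self_eq_norm_sq, real_inner_comm a c, real_inner_comm b c] at this
      linarith
    set A := ‖a‖
    set B := ‖b‖
    set C := ‖c‖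
    have pd : @inner ℝ _ _ a b = (C^2 - A^2 - B^2)/2 := by linarith
    have qd : @inner ℝ _ _ b c = (A^2 - B^2 - C^2)/2 := by linarith
    have rd : @inner ℝ _ _ a c = (B^2 - A^2 - C^2)/2 := by linarith
    rw [pd, rd] at F1
    rw [pd, qd] at F2
    rw [rd, qd] at F3
    have hA' : A ≠ 0 := ne_of_gt hA0
    have hB' : B ≠ 0 := ne_of_gt hB0
    have hC' : C ≠ 0 := ne_of_gt hC0
    field_simp at F1 F2 F3
    have e1 : 2*A*B*C + C*(C^2 - A^2 - B^2) + B*(B^2 - A^2 - C^2) = 0 := by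
      have h2 : (2*A) * (2*A*B*C + C*(C^2 - A^2 - B^2) + B*(B^2 - A^2 - C^2)) = 0 := by
        linear_combination (2*A) * F1
      rcases mul_eq_zero.mp h2 with h' | h'
      · linarith
      · exact h'
    have e2 : 2*A*B*C + C*(C^2 - A^2 - B^2) + A*(A^2 - B^2 - C^2) = 0 := by
      have h2 : (2*B) * (2*A*B*C + C*(C^2 - A^2 - B^2) + A*(A^2 - B^2 - C^2)) = 0 := by
        linear_combination (2*B) * F2
      rcases mul_eq_zero.mp h2 with h' | h'
      · linarith
      · exact h'
    have e3 : 2*A*B*C + B*(B^2 - A^2 - C^2) + A*(A^2 - B^2 - C^2) = 0 := by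
      have h2 : (2*C) * (2*A*B*C + B*(B^2 - A^2 - C^2) + A*(A^2 - B^2 - C^2)) = 0 := by
        linear_combination (2*C) * F3
      rcases mul_eq_zero.mp h2 with h' | h'
      · linarith
      · exact h'
    clear h hsum ha hb hc E1 E2 E3 F1 F2 F3 cab cba ccb pd qd rd
    have hABC : 0 < A*B*C := by positivity
    have e2' : (A+C)*((A-C)^2 - B^2) + 2*(A*B*C) = 0 := by linear_combination e2
    have e3' : (A+B)*((A-B)^2 - C^2) + 2*(A*B*C) = 0 := by linear_combination e3
    have tri1 : C < A + B := by
      by_contra hcon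
      push_neg at hcon
      have h1 : B ≤ C - A := by linarith
      have h2 : B^2 ≤ (A-C)^2 := by nlinarith
      have h3 : 0 ≤ (A+C)*((A-C)^2 - B^2) := mul_nonneg (by linarith) (by linarith)
      linarith
    have tri2 : A < B + C := by
      by_contra hcon
      push_neg at hcon
      have h1 : C ≤ A - B := by linarith
      have h2 : C^2 ≤ (A-B)^2 := by nlinarith
      have h3 : 0 ≤ (A+B)*((A-B)^2 - C^2) := mul_nonneg (by linarith) (by linarith)
      linarith
    have k1 : (B - A) * ((A + B - C) * (A + B + C)) = 0 := by linear_combination e1 - e2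
    have k2 : (C - B) * ((B + C - A) * (A + B + C)) = 0 := by linear_combination e2 - e3
    have hAB : A = B := by
      rcases mul_eq_zero.mp k1 with h' | h'
      · linarith
      · rcases mul_eq_zero.mp h' with h'' | h'' <;> linarith
    have hBC : B = C := by
      rcases mul_eq_zero.mp k2 with h' | h'
      · linarith
      · rcases mul_eq_zero.mp h' with h'' | h'' <;> linarith
    exact ⟨hAB, hBC⟩
  · rintro ⟨h1, h2⟩
    rw [← h1, ← h1.trans h2, ← smul_add, ← smul_add, hsum, smul_zero]
end

section
/- Let a, b, c, d be nonzero vectors in ℝ² with a + b + c + d = 0, and suppose each consecutive pair in the cyclic order (a, b), (b, c), (c, d), (d, a) is linearly independent (the edge vectors of a strictly convex quadrilateral, in cyclic order). Then a/‖a‖ + b/‖b‖ + c/‖c‖ + d/‖d‖ = 0 if and only if c = −a and d = −b. Consequently, a convex quadrilateral is Viviani if and only if it is a parallelogram. -/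
open RealInnerProductSpace

theorem viviani_quadrilateral_iff_parallelogram
    (a b c d : EuclideanSpace ℝ (Fin 2))
    (ha : a ≠ 0) (hb : b ≠ 0) (hc : c ≠ 0) (hd : d ≠ 0)
    (hab : LinearIndependent ℝ ![a, b]) (hbc : LinearIndependent ℝ ![b, c])
    (hcd : LinearIndependent ℝ ![c, d]) (hda : LinearIndependent ℝ ![d, a])
    (hsum : a + b + c + d = 0) :
    (‖a‖⁻¹ • a + ‖b‖⁻¹ • b + ‖c‖⁻¹ • c + ‖d‖⁻¹ • d = 0) ↔ (c = -a ∧ d = -b) := by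
  constructor
  · intro h
    have hr1 : (0:ℝ) < ‖a‖ := norm_pos_iff.2 ha
    have hr2 : (0:ℝ) < ‖b‖ := norm_pos_iff.2 hb
    have hr3 : (0:ℝ) < ‖c‖ := norm_pos_iff.2 hc
    have hr4 : (0:ℝ) < ‖d‖ := norm_pos_iff.2 hd
    set u : EuclideanSpace ℝ (Fin 2) := ‖a‖⁻¹ • a with hu
    set v : EuclideanSpace ℝ (Fin 2) := ‖b‖⁻¹ • b with hv
    set w : EuclideanSpace ℝ (Fin 2) := ‖c‖⁻¹ • c with hw
    set z : EuclideanSpace ℝ (Fin 2) := ‖d‖⁻¹ • d with hz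
    have hau : a = ‖a‖ • u := by rw [hu, smul_smul, mul_inv_cancel₀ hr1.ne', one_smul]
    have hbv : b = ‖b‖ • v := by rw [hv, smul_smul, mul_inv_cancel₀ hr2.ne', one_smul]
    have hcw : c = ‖c‖ • w := by rw [hw, smul_smul, mul_inv_cancel₀ hr3.ne', one_smul]
    have hdz : d = ‖d‖ • z := by rw [hz, smul_smul, mul_inv_cancel₀ hr4.ne', one_smul]
    have hnu : ‖u‖ = 1 := by
      rw [hu, norm_smul, Real.norm_eq_abs, abs_of_pos (inv_pos.2 hr1), inv_mul_cancel₀ hr1.ne']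
    have hnv : ‖v‖ = 1 := by
      rw [hv, norm_smul, Real.norm_eq_abs, abs_of_pos (inv_pos.2 hr2), inv_mul_cancel₀ hr2.ne']
    have hnw : ‖w‖ = 1 := by
      rw [hw, norm_smul, Real.norm_eq_abs, abs_of_pos (inv_pos.2 hr3), inv_mul_cancel₀ hr3.ne']
    have hnz : ‖z‖ = 1 := by
      rw [hz, norm_smul, Real.norm_eq_abs, abs_of_pos (inv_pos.2 hr4), inv_mul_cancel₀ hr4.ne']
    -- u, v linearly independent
    have huv : LinearIndependent ℝ ![u, v] := by
      rw [LinearIndependent.pair_iff] at hab ⊢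
      intro s t hst
      have h0 : (s * ‖a‖⁻¹) • a + (t * ‖b‖⁻¹) • b = 0 := by
        simpa [hu, hv, smul_smul] using hst
      obtain ⟨hs, ht⟩ := hab _ _ h0
      constructor
      · exact by
          have := mul_eq_zero.1 hs
          rcases this with h' | h'
          · exact h'
          · exact absurd h' (inv_ne_zero hr1.ne')
      · exact by
          have := mul_eq_zero.1 ht
          rcases this with h' | h'
          · exact h'
          · exact absurd h' (inv_ne_zero hr2.ne')
    -- w in span of u, v
    have hspan : Submodule.span ℝ (Set.range ![u, v]) = ⊤ :=
      huv.span_eq_top_of_card_eq_finrank (by simp [finrank_euclideanSpace_fin])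
    have hrange : Set.range ![u, v] = {u, v} := by
      ext x
      simp [Fin.exists_fin_two]; tauto
    have hwmem : w ∈ Submodule.span ℝ ({u, v} : Set (EuclideanSpace ℝ (Fin 2))) := by
      rw [← hrange, hspan]; trivial
    obtain ⟨α, β, hαβ⟩ := Submodule.mem_span_pair.1 hwmem
    set p : ℝ := ⟪u, v⟫ with hp
    -- non-parallel facts
    have hnotpar_ab : ∀ s : ℝ, a ≠ s • b := by
      intro s hs
      have := (LinearIndependent.pair_iff.1 hab 1 (-s) (by rw [hs]; module)).1
      norm_num at this
    have hnotpar_bc : ∀ s : ℝ, c ≠ s • b := by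
      intro s hs
      have := (LinearIndependent.pair_iff.1 hbc (-s) 1 (by rw [hs]; module)).2
      norm_num at this
    have hp_ne_one : p ≠ 1 := by
      intro hpe
      have huv1 : u = v := (inner_eq_one_iff_of_norm_eq_one hnu hnv).1 hpe
      refine hnotpar_ab (‖a‖ * ‖b‖⁻¹) ?_
      conv_lhs => rw [hau, huv1, hv]
      rw [smul_smul]
    have hp_ne_negone : p ≠ -1 := by
      intro hpe
      have h1 : ⟪u, -v⟫ = 1 := by rw [inner_neg_right]; rw [hp] at hpe; linarith
      have huv1 : u = -v := (inner_eq_one_iff_of_norm_eq_one hnu (by rwa [norm_neg])).1 h1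
      refine hnotpar_ab (-(‖a‖ * ‖b‖⁻¹)) ?_
      conv_lhs => rw [hau, huv1, hv]
      module
    have hvu : ⟪v, u⟫ = p := (real_inner_comm u v).trans hp.symm
    -- inner product basics
    have hiu : ⟪u, u⟫ = 1 := by rw [real_inner_self_eq_norm_mul_norm, hnu]; ring
    have hiv : ⟪v, v⟫ = 1 := by rw [real_inner_self_eq_norm_mul_norm, hnv]; ring
    -- unit condition for w
    have hWW : ⟪w, w⟫ = 1 := by rw [real_inner_self_eq_norm_mul_norm, hnw]; ring
    have hW : α ^ 2 + 2 * α * β * p + β ^ 2 = 1 := by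
      rw [← hαβ] at hWW
      simp only [inner_add_add_self, real_inner_smul_left, real_inner_smul_right, hiu, hiv,
        hvu, ← hp] at hWW
      linear_combination hWW
    -- z in terms of u, v
    have hz1 : z = -(u + v + w) := eq_neg_of_add_eq_zero_right h
    have hZcoef : z = (-(1 + α)) • u + (-(1 + β)) • v := by
      rw [hz1, ← hαβ]; module
    have hZZ : ⟪z, z⟫ = 1 := by rw [real_inner_self_eq_norm_mul_norm, hnz]; ring
    have hZ : (1 + α) ^ 2 + 2 * (1 + α) * (1 + β) * p + (1 + β) ^ 2 = 1 := by
      rw [hZcoef] at hZZ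
      simp only [inner_add_add_self, real_inner_smul_left, real_inner_smul_right, hiu, hiv,
        hvu, ← hp] at hZZ
      linear_combination hZZ
    have hsum1 : (1 + α + β) * (1 + p) = 0 := by linear_combination (hZ - hW) / 2
    have hβ : β = -1 - α := by
      rcases mul_eq_zero.1 hsum1 with h' | h'
      · linarith
      · exact absurd (by linarith) hp_ne_negone
    subst hβ
    have hαeq : α * (1 + α) * (1 - p) = 0 := by linear_combination hW / 2
    have hα : α = 0 ∨ α = -1 := by
      rcases mul_eq_zero.1 hαeq with h' | h'
      · rcases mul_eq_zero.1 h' with h'' | h''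
        · exact Or.inl h''
        · exact Or.inr (by linarith)
      · exact absurd (by linarith) hp_ne_one
    rcases hα with hα0 | hα1
    · -- w = -v : contradiction with hbc
      exfalso
      subst hα0
      have hwv : w = -v := by rw [← hαβ]; module
      refine hnotpar_bc (-(‖c‖ * ‖b‖⁻¹)) ?_
      conv_lhs => rw [hcw, hwv, hv]
      module
    · -- w = -u, z = -v
      subst hα1
      have hwu : w = -u := by rw [← hαβ]; module
      have hzv : z = -v := by rw [hZcoef]; module
      have hc' : c = -((‖c‖ * ‖a‖⁻¹) • a) := by
        conv_lhs => rw [hcw, hwu, hu]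
        module
      have hd' : d = -((‖d‖ * ‖b‖⁻¹) • b) := by
        conv_lhs => rw [hdz, hzv, hv]
        module
      have key : (1 - ‖c‖ * ‖a‖⁻¹) • a + (1 - ‖d‖ * ‖b‖⁻¹) • b = 0 := by
        rw [hc', hd'] at hsum
        calc (1 - ‖c‖ * ‖a‖⁻¹) • a + (1 - ‖d‖ * ‖b‖⁻¹) • b
            = a + b + -((‖c‖ * ‖a‖⁻¹) • a) + -((‖d‖ * ‖b‖⁻¹) • b) := by module
          _ = 0 := hsum
      obtain ⟨h1, h2⟩ := LinearIndependent.pair_iff.1 hab _ _ key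
      have hca : ‖c‖ * ‖a‖⁻¹ = 1 := by linarith
      have hdb : ‖d‖ * ‖b‖⁻¹ = 1 := by linarith
      constructor
      · rw [hc', hca, one_smul]
      · rw [hd', hdb, one_smul]
  · rintro ⟨rfl, rfl⟩
    simp only [norm_neg]
    module
end

section
/- For every real t with 0 < t < π, the four vectors in ℝ³ given by n₁ = (cos(t/2), (sin t)/2, (1 − cos t)/2), n₂ = (−cos(t/2), (sin t)/2, (1 − cos t)/2), n₃ = (0, −sin t, cos t), n₄ = (0, 0, −1) are unit vectors and satisfy n₁ + n₂ + n₃ + n₄ = 0. Consequently, for any scalars c₁, c₂, c₃, c₄ ∈ ℝ, the function v(P) = Σ_{i=1}^4 (c_i − ⟪P, n_i⟫) is constant on ℝ³; i.e., any tetrahedron whose faces have these outward unit normals is Viviani. -/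
open scoped RealInnerProductSpace
open Real

theorem irregular_viviani_tetrahedron (t : ℝ) (ht0 : 0 < t) (htπ : t < π)
    (N : Fin 4 → EuclideanSpace ℝ (Fin 3))
    (h1 : N 0 = !₂[Real.cos (t / 2), Real.sin t / 2, (1 - Real.cos t) / 2])
    (h2 : N 1 = !₂[-Real.cos (t / 2), Real.sin t / 2, (1 - Real.cos t) / 2])
    (h3 : N 2 = !₂[0, -Real.sin t, Real.cos t])
    (h4 : N 3 = !₂[0, 0, -1]) :
    (∀ i, ‖N i‖ = 1) ∧ (∑ i, N i) = 0 ∧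
      ∀ (c : Fin 4 → ℝ) (P Q : EuclideanSpace ℝ (Fin 3)),
        (∑ i, (c i - ⟪P, N i⟫)) = (∑ i, (c i - ⟪Q, N i⟫)) := by
  have hc := Real.cos_sq (t / 2)
  rw [show (2:ℝ) * (t/2) = t by ring] at hc
  have hpyt := Real.sin_sq_add_cos_sq t
  have hsum : (∑ i, N i) = 0 := by
    rw [Fin.sum_univ_four, h1, h2, h3, h4]
    ext i
    fin_cases i <;>
      simp [EuclideanSpace.equiv, PiLp.add_apply, PiLp.zero_apply] <;> ring
  refine ⟨?_, hsum, ?_⟩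
  · intro i
    have key : ∀ v : EuclideanSpace ℝ (Fin 3),
        (v 0)^2 + (v 1)^2 + (v 2)^2 = 1 → ‖v‖ = 1 := by
      intro v hv
      rw [EuclideanSpace.norm_eq]
      rw [Fin.sum_univ_three]
      rw [show (1:ℝ) = Real.sqrt 1 by simp]
      congr 1
      simpa [sq_abs, sq] using hv
    fin_cases i
    · show ‖N 0‖ = 1
      rw [h1]; apply key; simp; nlinarith
    · show ‖N 1‖ = 1
      rw [h2]; apply key; simp; nlinarith
    · show ‖N 2‖ = 1
      rw [h3]; apply key; simp
    · show ‖N 3‖ = 1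
      rw [h4]; apply key; simp
  · intro c P Q
    have key : ∀ R : EuclideanSpace ℝ (Fin 3),
        (∑ i, (c i - ⟪R, N i⟫)) = ∑ i, c i := by
      intro R
      rw [Finset.sum_sub_distrib, ← inner_sum, hsum, inner_zero_right, sub_zero]
    rw [key, key]
end

section
/- (Theorem 2(a)) Let P₁, …, P_k be points in ℝ^n, let P minimize Q ↦ Σ_{i=1}^k ‖Q − P_i‖ over ℝ^n, and suppose P ≠ P_i for all i. Set n_i = (P_i − P)/‖P_i − P‖ and choose any scalars c_i ∈ ℝ. Then the function v(Q) = Σ_{i=1}^k (c_i − ⟪Q, n_i⟫) is constant on ℝ^n; i.e., any family of oriented hyperplanes whose unit normals are the directions from the Fermat point to the given points is Viviani. -/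
open scoped RealInnerProductSpace

private lemma norm_line_hasDerivAt {n : ℕ} (x v : EuclideanSpace ℝ (Fin n)) (hx : x ≠ 0) :
    HasDerivAt (fun t : ℝ => ‖x + t • v‖) (⟪x, v⟫ / ‖x‖) 0 := by
  have hf : HasDerivAt (fun t : ℝ => x + t • v) v 0 := by
    simpa using ((hasDerivAt_id (0:ℝ)).smul_const v).const_add x
  have h2 : HasDerivAt (fun t : ℝ => ‖x + t • v‖ ^ 2) (2 * ⟪x, v⟫) 0 := by
    simpa using hf.norm_sq
  have h3 : HasDerivAt (fun t : ℝ => Real.sqrt (‖x + t • v‖ ^ 2))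
      (2 * ⟪x, v⟫ / (2 * Real.sqrt (‖x + (0:ℝ) • v‖ ^ 2))) 0 := by
    apply h2.sqrt
    simpa using pow_ne_zero 2 (norm_ne_zero_iff.mpr hx)
  have heq : (fun t : ℝ => Real.sqrt (‖x + t • v‖ ^ 2)) = fun t : ℝ => ‖x + t • v‖ := by
    funext t; rw [Real.sqrt_sq (norm_nonneg _)]
  rw [heq] at h3
  convert h3 using 1
  rw [show x + (0:ℝ) • v = x by simp, Real.sqrt_sq (norm_nonneg _)]
  have hn : ‖x‖ ≠ 0 := norm_ne_zero_iff.mpr hx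
  field_simp

theorem viviani_of_fermat_point (n k : ℕ)
    (Pt : Fin k → EuclideanSpace ℝ (Fin n))
    (P : EuclideanSpace ℝ (Fin n))
    (hmin : ∀ Q : EuclideanSpace ℝ (Fin n),
      (∑ i, ‖P - Pt i‖) ≤ (∑ i, ‖Q - Pt i‖))
    (hne : ∀ i, P ≠ Pt i)
    (N : Fin k → EuclideanSpace ℝ (Fin n))
    (hN : ∀ i, N i = ‖Pt i - P‖⁻¹ • (Pt i - P))
    (c : Fin k → ℝ) :
    ∀ Q Q' : EuclideanSpace ℝ (Fin n),
      (∑ i, (c i - ⟪Q, N i⟫)) = (∑ i, (c i - ⟪Q', N i⟫)) := by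
  -- key: for every v, ∑ i, ⟪v, N i⟫ = 0
  have key : ∀ v : EuclideanSpace ℝ (Fin n), (∑ i, ⟪v, N i⟫) = 0 := by
    intro v
    set g : ℝ → ℝ := fun t => ∑ i, ‖(P + t • v) - Pt i‖ with hg
    have hderiv : HasDerivAt g (∑ i, ⟪P - Pt i, v⟫ / ‖P - Pt i‖) 0 := by
      apply HasDerivAt.fun_sum
      intro i _
      have := norm_line_hasDerivAt (P - Pt i) v (sub_ne_zero.mpr (hne i))
      have h' : (fun y : ℝ => ‖P + y • v - Pt i‖) = fun t => ‖P - Pt i + t • v‖ := by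
        funext t; congr 1; abel
      rw [h']; exact this
    have hmin0 : IsLocalMin g 0 := by
      apply Filter.Eventually.of_forall
      intro t
      simp only [hg, zero_smul, add_zero]
      exact hmin (P + t • v)
    have hz : (∑ i, ⟪P - Pt i, v⟫ / ‖P - Pt i‖) = 0 := by
      have := hmin0.deriv_eq_zero
      rwa [hderiv.deriv] at this
    have : (∑ i, ⟪v, N i⟫) = -(∑ i, ⟪P - Pt i, v⟫ / ‖P - Pt i‖) := by
      rw [← Finset.sum_neg_distrib]
      apply Finset.sum_congr rfl
      intro i _
      rw [hN i, real_inner_smul_right, real_inner_comm]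
      have : (P - Pt i) = -(Pt i - P) := by abel
      rw [this, inner_neg_left, norm_neg, div_eq_inv_mul]
      ring
    rw [this, hz, neg_zero]
  intro Q Q'
  simp only [Finset.sum_sub_distrib, key Q, key Q']
end

section
/- (Theorem 2(b)) Let (n_1, c_1), …, (n_k, c_k) define oriented hyperplanes in ℝ^n with n_1 + ⋯ + n_k = 0 (a Viviani family), let P ∈ ℝ^n be a point whose signed distances d_i = c_i − ⟪P, n_i⟫ satisfy d_i ≥ 0 for all i, and let P_i = P + d_i • n_i be the orthogonal projection of P onto the i-th hyperplane. Then for every Q ∈ ℝ^n, Σ_{i=1}^k ‖P − P_i‖ ≤ Σ_{i=1}^k ‖Q − P_i‖; that is, P is a Fermat point of P_1, …, P_k. -/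
open scoped RealInnerProductSpace

theorem fermat_point_of_viviani (n k : ℕ)
    (N : Fin k → EuclideanSpace ℝ (Fin n)) (c : Fin k → ℝ)
    (hN : ∀ i, ‖N i‖ = 1)
    (hsum : (∑ i, N i) = 0)
    (P : EuclideanSpace ℝ (Fin n))
    (hd : ∀ i, 0 ≤ c i - ⟪P, N i⟫)
    (Pt : Fin k → EuclideanSpace ℝ (Fin n))
    (hPt : ∀ i, Pt i = P + (c i - ⟪P, N i⟫) • N i) :
    ∀ Q : EuclideanSpace ℝ (Fin n),
      (∑ i, ‖P - Pt i‖) ≤ (∑ i, ‖Q - Pt i‖) := by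
  intro Q
  set d : Fin k → ℝ := fun i => c i - ⟪P, N i⟫ with hdef
  have hleft : ∀ i, ‖P - Pt i‖ = d i := by
    intro i
    rw [hPt i]
    have : P - (P + d i • N i) = -(d i • N i) := by abel
    rw [this, norm_neg, norm_smul, hN i, mul_one,
      Real.norm_eq_abs, abs_of_nonneg (hd i)]
  have hright : ∀ i, d i + ⟪P - Q, N i⟫ ≤ ‖Q - Pt i‖ := by
    intro i
    have h1 : ⟪Pt i - Q, N i⟫ ≤ ‖Q - Pt i‖ := by
      calc ⟪Pt i - Q, N i⟫ ≤ ‖Pt i - Q‖ * ‖N i‖ := real_inner_le_norm _ _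
        _ = ‖Q - Pt i‖ := by rw [hN i, mul_one, norm_sub_rev]
    have h2 : ⟪Pt i - Q, N i⟫ = d i + ⟪P - Q, N i⟫ := by
      have : Pt i - Q = (P - Q) + d i • N i := by rw [hPt i]; abel
      rw [this, inner_add_left, inner_smul_left]
      have := hN i
      have hn : ⟪N i, N i⟫ = 1 := by
        rw [real_inner_self_eq_norm_sq, this]; norm_num
      simp [hn]
      rw [this]; ring
    linarith [h1, h2.symm.le]
  calc (∑ i, ‖P - Pt i‖) = ∑ i, d i := by simp [hleft]
    _ = ∑ i, (d i + ⟪P - Q, N i⟫) := by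
        rw [Finset.sum_add_distrib]
        have : (∑ i, ⟪P - Q, N i⟫) = ⟪P - Q, ∑ i, N i⟫ := by
          rw [inner_sum]
        rw [this, hsum, inner_zero_right, add_zero]
    _ ≤ ∑ i, ‖Q - Pt i‖ := Finset.sum_le_sum fun i _ => hright i
end

section
/- Let P₁, …, P_k be points in ℝ^n (k ≥ 3) that are not all collinear (i.e., they do not all lie on a common line). Then the function f(Q) = Σ_{i=1}^k ‖Q − P_i‖ attains its minimum over ℝ^n at exactly one point P, and this unique minimizer P lies in the convex hull of {P₁, …, P_k}. -/
open scoped RealInnerProductSpace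

section Aux

variable {n : ℕ}

/-- Existence of a global minimizer of the sum of distances. -/
lemma fermat_exists_min (k : ℕ) (hk : 0 < k) (Pt : Fin k → EuclideanSpace ℝ (Fin n)) :
    ∃ P : EuclideanSpace ℝ (Fin n),
      ∀ Q : EuclideanSpace ℝ (Fin n), (∑ i, ‖P - Pt i‖) ≤ (∑ i, ‖Q - Pt i‖) := by
  haveI : NeZero k := ⟨hk.ne'⟩
  set f : EuclideanSpace ℝ (Fin n) → ℝ := fun Q => ∑ i, ‖Q - Pt i‖ with hf
  have hcont : Continuous f := by
    apply continuous_finset_sum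
    intro i _
    exact (continuous_id.sub continuous_const).norm
  set R : ℝ := f (Pt 0) with hR
  have hR0 : 0 ≤ R := Finset.sum_nonneg fun i _ => norm_nonneg _
  have hmem : Pt 0 ∈ Metric.closedBall (Pt 0) R := by
    simpa [Metric.mem_closedBall] using hR0
  obtain ⟨P, hPmem, hPmin⟩ :=
    (isCompact_closedBall (Pt 0) R).exists_isMinOn ⟨Pt 0, hmem⟩ hcont.continuousOn
  refine ⟨P, fun Q => ?_⟩
  by_cases hQ : Q ∈ Metric.closedBall (Pt 0) R
  · exact hPmin hQ
  · have h1 : f P ≤ R := hPmin hmem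
    have h2 : R < ‖Q - Pt 0‖ := by
      simpa [Metric.mem_closedBall, not_le, dist_eq_norm] using hQ
    have h3 : ‖Q - Pt 0‖ ≤ f Q :=
      Finset.single_le_sum (f := fun i : Fin k => ‖Q - Pt i‖) (fun i _ => norm_nonneg _) (Finset.mem_univ 0)
    calc f P ≤ R := h1
      _ ≤ f Q := le_trans h2.le h3

/-- If `P - q` and `P' - q` lie on a common ray and `P ≠ P'`, then `q` lies on
the line through `P` and `P'`. -/
lemma mem_line_of_sameRay {P P' q : EuclideanSpace ℝ (Fin n)} (hne : P ≠ P')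
    (h : SameRay ℝ (P - q) (P' - q)) : ∃ c : ℝ, q = c • (P' - P) + P := by
  rcases eq_or_ne (P - q) 0 with h1 | h1
  · exact ⟨0, by rw [zero_smul, zero_add]; exact (sub_eq_zero.mp h1).symm⟩
  rcases eq_or_ne (P' - q) 0 with h2 | h2
  · refine ⟨1, ?_⟩
    have hq : q = P' := (sub_eq_zero.mp h2).symm
    rw [hq, one_smul]; abel
  obtain ⟨r, s, hr, hs, heq⟩ := h.exists_pos h1 h2
  -- heq : r • (P - q) = s • (P' - q)
  rcases eq_or_ne r s with hrs | hrs
  · exfalso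
    subst hrs
    have hPq : P - q = P' - q := smul_right_injective _ hr.ne' heq
    exact hne (sub_left_injective hPq)
  · have hd : s - r ≠ 0 := sub_ne_zero.mpr (Ne.symm hrs)
    refine ⟨s / (s - r), ?_⟩
    have h' : (s - r) • q = s • P' - r • P := by
      linear_combination (norm := module) heq
    have key : (s - r) • q = (s - r) • ((s / (s - r)) • (P' - P) + P) := by
      have hmul : (s - r) * (s / (s - r)) = s := by field_simp
      rw [h', smul_add, smul_smul, hmul]
      module
    exact smul_right_injective _ hd key

end Aux

theorem fermat_point_exists_unique (n k : ℕ) (hk : 3 ≤ k)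
    (Pt : Fin k → EuclideanSpace ℝ (Fin n))
    (hcol : ¬ Collinear ℝ (Set.range Pt)) :
    ∃ P : EuclideanSpace ℝ (Fin n),
      (∀ Q : EuclideanSpace ℝ (Fin n), (∑ i, ‖P - Pt i‖) ≤ (∑ i, ‖Q - Pt i‖)) ∧
      P ∈ convexHull ℝ (Set.range Pt) ∧
      ∀ P' : EuclideanSpace ℝ (Fin n),
        (∀ Q : EuclideanSpace ℝ (Fin n), (∑ i, ‖P' - Pt i‖) ≤ (∑ i, ‖Q - Pt i‖)) → P' = P := by
  classical
  have hk0 : 0 < k := by omega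
  haveI : NeZero k := ⟨hk0.ne'⟩
  obtain ⟨P, hPmin⟩ := fermat_exists_min k hk0 Pt
  -- P lies in the convex hull
  have hPC : P ∈ convexHull ℝ (Set.range Pt) := by
    set C : Set (EuclideanSpace ℝ (Fin n)) := convexHull ℝ (Set.range Pt) with hC
    have hCconv : Convex ℝ C := convex_convexHull _ _
    have hCcompact : IsCompact C := (Set.finite_range Pt).isCompact_convexHull (𝕜 := ℝ)
    have hCne : C.Nonempty := ⟨Pt 0, subset_convexHull _ _ ⟨0, rfl⟩⟩
    obtain ⟨v, hvC, hv⟩ :=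
      exists_norm_eq_iInf_of_complete_convex hCne hCcompact.isClosed.isComplete hCconv P
    have hproj : ∀ w ∈ C, ⟪P - v, w - v⟫ ≤ 0 :=
      (norm_eq_iInf_iff_real_inner_le_zero hCconv hvC).mp hv
    by_contra hPnC
    have hPv : P ≠ v := fun h => hPnC (h ▸ hvC)
    have hlt : ∀ i : Fin k, ‖v - Pt i‖ < ‖P - Pt i‖ := by
      intro i
      have hi : Pt i ∈ C := subset_convexHull _ _ ⟨i, rfl⟩
      have hinner : ⟪P - v, Pt i - v⟫ ≤ 0 := hproj _ hi
      have hsq : ‖v - Pt i‖ ^ 2 < ‖P - Pt i‖ ^ 2 := by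
        have hexp : P - Pt i = (P - v) + (v - Pt i) := by abel
        have hnorm : ‖(P - v) + (v - Pt i)‖ ^ 2
            = ‖P - v‖ ^ 2 + 2 * ⟪P - v, v - Pt i⟫ + ‖v - Pt i‖ ^ 2 := by
          rw [norm_add_sq_real]
        have h1 : 0 ≤ ⟪P - v, v - Pt i⟫ := by
          have hrw : ⟪P - v, v - Pt i⟫ = - ⟪P - v, Pt i - v⟫ := by
            rw [← inner_neg_right]; congr 1; abel
          rw [hrw]; linarith
        have h2 : 0 < ‖P - v‖ ^ 2 := by
          have : 0 < ‖P - v‖ := by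
            rw [norm_pos_iff, sub_ne_zero]; exact hPv
          positivity
        rw [hexp, hnorm]
        nlinarith
      exact lt_of_pow_lt_pow_left₀ 2 (norm_nonneg _) hsq
    have hle : (∑ i, ‖P - Pt i‖) ≤ ∑ i, ‖v - Pt i‖ := hPmin v
    have hstrict : (∑ i, ‖v - Pt i‖) < ∑ i, ‖P - Pt i‖ :=
      Finset.sum_lt_sum_of_nonempty Finset.univ_nonempty fun i _ => hlt i
    linarith
  refine ⟨P, hPmin, hPC, ?_⟩
  -- uniqueness
  intro P' hP'min
  by_contra hne
  set M : EuclideanSpace ℝ (Fin n) := midpoint ℝ P' P with hM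
  have hfPP' : (∑ i, ‖P' - Pt i‖) = ∑ i, ‖P - Pt i‖ :=
    le_antisymm (hP'min P) (hPmin P')
  have hMdiff : ∀ i : Fin k, M - Pt i = (2:ℝ)⁻¹ • ((P' - Pt i) + (P - Pt i)) := by
    intro i
    rw [hM, midpoint_eq_smul_add]
    have h2 : (⅟ 2 : ℝ) = (2:ℝ)⁻¹ := by norm_num
    rw [h2]
    module
  have hMle : ∀ i ∈ Finset.univ,
      ‖M - Pt i‖ ≤ (‖P' - Pt i‖ + ‖P - Pt i‖) / 2 := by
    intro i _
    rw [hMdiff i, norm_smul]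
    have := norm_add_le (P' - Pt i) (P - Pt i)
    simp only [norm_inv, Real.norm_ofNat]
    linarith
  have hsum_le : (∑ i, ‖M - Pt i‖) ≤ ∑ i, (‖P' - Pt i‖ + ‖P - Pt i‖) / 2 :=
    Finset.sum_le_sum hMle
  have hsum_eq : (∑ i, (‖P' - Pt i‖ + ‖P - Pt i‖) / 2) = ∑ i, ‖P - Pt i‖ := by
    rw [← Finset.sum_div, Finset.sum_add_distrib, hfPP']
    ring
  have hge : (∑ i, ‖P - Pt i‖) ≤ ∑ i, ‖M - Pt i‖ := hPmin M
  have hall : ∀ i ∈ Finset.univ,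
      ‖M - Pt i‖ = (‖P' - Pt i‖ + ‖P - Pt i‖) / 2 := by
    rw [← Finset.sum_eq_sum_iff_of_le hMle]
    linarith
  have hray : ∀ i : Fin k, SameRay ℝ (P' - Pt i) (P - Pt i) := by
    intro i
    have h1 := hall i (Finset.mem_univ i)
    rw [sameRay_iff_norm_add]
    have h2 : ‖M - Pt i‖ = (2:ℝ)⁻¹ * ‖(P' - Pt i) + (P - Pt i)‖ := by
      rw [hMdiff i, norm_smul]
      simp
    rw [h2] at h1
    linarith
  -- all points lie on the line through P' and P : contradiction with hcol
  apply hcol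
  have hins : Collinear ℝ (insert P' (Set.range Pt)) := by
    rw [collinear_iff_of_mem (Set.mem_insert P' _)]
    refine ⟨P - P', fun p hp => ?_⟩
    rcases hp with hp | ⟨i, rfl⟩
    · exact ⟨0, by simp [hp]⟩
    · obtain ⟨c, hc⟩ := mem_line_of_sameRay hne (hray i)
      exact ⟨c, hc⟩
  exact hins.subset (Set.subset_insert _ _)
end

section
/- (Viviani's inequality for outside points) Let (n_1, c_1), …, (n_k, c_k) define oriented hyperplanes in ℝ^n with n_1 + ⋯ + n_k = 0. Let P ∈ ℝ^n satisfy c_i − ⟪P, n_i⟫ ≥ 0 for all i, and let Q ∈ ℝ^n satisfy c_j − ⟪Q, n_j⟫ < 0 for some j. Then Σ_{i=1}^k |c_i − ⟪Q, n_i⟫| > Σ_{i=1}^k (c_i − ⟪P, n_i⟫); that is, the sum of the (unsigned) distances from the outside point Q to the hyperplanes strictly exceeds the constant sum of distances from inside points. -/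
open scoped RealInnerProductSpace

theorem viviani_outside_point (n k : ℕ)
    (N : Fin k → EuclideanSpace ℝ (Fin n)) (c : Fin k → ℝ)
    (hN : ∀ i, ‖N i‖ = 1)
    (hsum : (∑ i, N i) = 0)
    (P Q : EuclideanSpace ℝ (Fin n))
    (hP : ∀ i, 0 ≤ c i - ⟪P, N i⟫)
    (hQ : ∃ j, c j - ⟪Q, N j⟫ < 0) :
    (∑ i, (c i - ⟪P, N i⟫)) < ∑ i, |c i - ⟪Q, N i⟫| := by
  have key : ∀ x : EuclideanSpace ℝ (Fin n),
      (∑ i, (c i - ⟪x, N i⟫)) = ∑ i, c i := by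
    intro x
    have : (∑ i, ⟪x, N i⟫) = 0 := by
      rw [← inner_sum, hsum, inner_zero_right]
    rw [Finset.sum_sub_distrib, this, sub_zero]
  have hPQ : (∑ i, (c i - ⟪P, N i⟫)) = ∑ i, (c i - ⟪Q, N i⟫) := by
    rw [key P, key Q]
  rw [hPQ]
  obtain ⟨j, hj⟩ := hQ
  refine Finset.sum_lt_sum (fun i _ => le_abs_self _) ⟨j, Finset.mem_univ j, ?_⟩
  rw [abs_of_neg hj]
  linarith
end

section
/- (Viviani (b)) Let k ≥ 3, r > 0, A ∈ ℝ², and A_j = A + r • (cos(2πj/k), sin(2πj/k)) for j = 0, …, k−1, the vertices of a regular k-gon with center A and circumradius r. Then for every B ∈ ℝ² with B ≠ A, Σ_{j=0}^{k−1} ‖A − A_j‖ < Σ_{j=0}^{k−1} ‖B − A_j‖; equivalently, k·r < Σ_{j=0}^{k−1} ‖B − A_j‖. -/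
open Real

open scoped RealInnerProductSpace in
theorem regular_polygon_center_minimizes (k : ℕ) (hk : 3 ≤ k) (r : ℝ) (hr : 0 < r)
    (A : EuclideanSpace ℝ (Fin 2))
    (N : Fin k → EuclideanSpace ℝ (Fin 2))
    (hN : ∀ j : Fin k,
      N j = ![Real.cos (2 * π * (j : ℝ) / k), Real.sin (2 * π * (j : ℝ) / k)])
    (V : Fin k → EuclideanSpace ℝ (Fin 2))
    (hV : ∀ j : Fin k, V j = A + r • N j) :
    ∀ B : EuclideanSpace ℝ (Fin 2), B ≠ A →
      (∑ j, ‖A - V j‖) < (∑ j, ‖B - V j‖) ∧ (k : ℝ) * r < ∑ j, ‖B - V j‖ := by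
  intro B hB
  have hkpos : (0:ℝ) < k := by positivity
  -- norm of N j is 1
  have hNnorm : ∀ j : Fin k, ‖N j‖ = 1 := by
    intro j
    rw [EuclideanSpace.norm_eq, hN j]
    simp [Fin.sum_univ_two, Real.sin_sq_add_cos_sq, Real.cos_sq_add_sin_sq]
  -- sum of N j is 0
  have hz : Complex.exp (2 * π / k * Complex.I) ≠ 1 := by
    intro h1
    obtain ⟨n, hn⟩ := Complex.exp_eq_one_iff.mp h1
    have hn' : (2 * π / k : ℂ) * Complex.I = ((n:ℂ) * (2 * π)) * Complex.I := by
      linear_combination hn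
    have : (2 * π / k : ℂ) = (n:ℂ) * (2 * π) := mul_right_cancel₀ Complex.I_ne_zero hn'
    have h2 : (2 * π / k : ℝ) = n * (2 * π) := by exact_mod_cast this
    have hπ := Real.pi_pos
    have hk1 : (3:ℝ) ≤ k := by exact_mod_cast hk
    have hlt : (2 * π / k : ℝ) < 2 * π := by
      rw [div_lt_iff₀ hkpos]
      nlinarith
    have hgt : (0:ℝ) < 2 * π / k := by positivity
    rcases lt_trichotomy (n:ℝ) 1 with h | h | h
    · have : (n:ℝ) ≤ 0 := by
        have : (n:ℤ) < 1 := by exact_mod_cast h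
        exact_mod_cast (by omega : (n:ℤ) ≤ 0)
      nlinarith
    · rw [h, one_mul] at h2; linarith
    · nlinarith
  have hexp : ∑ j : Fin k, Complex.exp (((2 * π * (j:ℝ) / k : ℝ) : ℂ) * Complex.I) = 0 := by
    have hterm : ∀ j ∈ Finset.range k, Complex.exp (((2 * π * (j:ℝ) / k : ℝ) : ℂ) * Complex.I)
        = Complex.exp (2 * π / k * Complex.I) ^ j := by
      intro j _
      rw [← Complex.exp_nat_mul]
      congr 1
      push_cast
      ring
    rw [Fin.sum_univ_eq_sum_range
      (fun j => Complex.exp (((2 * π * (j:ℝ) / k : ℝ) : ℂ) * Complex.I))]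
    rw [Finset.sum_congr rfl hterm]
    rw [geom_sum_eq hz]
    have : Complex.exp (2 * π / k * Complex.I) ^ k = 1 := by
      rw [← Complex.exp_nat_mul]
      have hk0 : (k:ℂ) ≠ 0 := by exact_mod_cast (by positivity : (k:ℝ) ≠ 0)
      have : (k : ℂ) * (2 * π / k * Complex.I) = 2 * π * Complex.I := by
        field_simp
      rw [this, Complex.exp_two_pi_mul_I]
    rw [this]
    simp
  have hcos : ∑ j : Fin k, Real.cos (2 * π * (j:ℝ) / k) = 0 := by
    have hc : ∀ j : Fin k, Real.cos (2 * π * (j:ℝ) / k)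
        = (Complex.exp (((2 * π * (j:ℝ) / k : ℝ) : ℂ) * Complex.I)).re :=
      fun j => (Complex.exp_ofReal_mul_I_re _).symm
    rw [Finset.sum_congr rfl (fun j _ => hc j), ← Complex.re_sum, hexp, Complex.zero_re]
  have hsin : ∑ j : Fin k, Real.sin (2 * π * (j:ℝ) / k) = 0 := by
    have hc : ∀ j : Fin k, Real.sin (2 * π * (j:ℝ) / k)
        = (Complex.exp (((2 * π * (j:ℝ) / k : ℝ) : ℂ) * Complex.I)).im :=
      fun j => (Complex.exp_ofReal_mul_I_im _).symm
    rw [Finset.sum_congr rfl (fun j _ => hc j), ← Complex.im_sum, hexp, Complex.zero_im]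
  have hNsum : ∑ j : Fin k, N j = 0 := by
    ext i
    rw [WithLp.ofLp_sum, Finset.sum_apply]
    fin_cases i
    · simpa [hN] using hcos
    · simpa [hN] using hsin
  -- pointwise inequality
  have hle : ∀ j : Fin k, ⟪N j, V j - B⟫ ≤ ‖B - V j‖ := by
    intro j
    calc ⟪N j, V j - B⟫ ≤ ‖N j‖ * ‖V j - B‖ := real_inner_le_norm _ _
      _ = ‖B - V j‖ := by rw [hNnorm j, one_mul, norm_sub_rev]
  -- sum of inner products equals k * r
  have hsum : ∑ j : Fin k, ⟪N j, V j - B⟫ = (k:ℝ) * r := by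
    have : ∀ j : Fin k, ⟪N j, V j - B⟫ = ⟪N j, A - B⟫ + r := by
      intro j
      rw [hV j]
      have : A + r • N j - B = (A - B) + r • N j := by abel
      rw [this, inner_add_right, real_inner_smul_right, real_inner_self_eq_norm_sq,
        hNnorm j]
      ring
    rw [Finset.sum_congr rfl (fun j _ => this j), Finset.sum_add_distrib]
    rw [← sum_inner, hNsum]
    simp
  -- strict inequality at some j
  have hstrict : ∃ j : Fin k, ⟪N j, V j - B⟫ < ‖B - V j‖ := by
    by_contra h
    push_neg at h
    have heq : ∀ j : Fin k, ⟪N j, V j - B⟫ = ‖N j‖ * ‖V j - B‖ := by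
      intro j
      rw [hNnorm j, one_mul]
      have := h j
      rw [norm_sub_rev] at this
      exact le_antisymm (by
        calc ⟪N j, V j - B⟫ ≤ ‖N j‖ * ‖V j - B‖ := real_inner_le_norm _ _
          _ = ‖V j - B‖ := by rw [hNnorm j, one_mul]) this
    -- equality case: V j - B = ‖V j - B‖ • N j
    have hcol : ∀ j : Fin k, V j - B = ‖V j - B‖ • N j := by
      intro j
      have := (inner_eq_norm_mul_iff_real).mp (heq j)
      rw [hNnorm j, one_smul] at this
      exact this.symm
    -- so B - A = (r - ‖V j - B‖) • N j for each j
    have hBA : ∀ j : Fin k, B - A = (r - ‖V j - B‖) • N j := by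
      intro j
      have h1 := hcol j
      rw [hV j] at h1
      have : B - A = r • N j - ‖A + r • N j - B‖ • N j := by
        rw [← h1]; abel
      rw [this, ← sub_smul]
      rw [hV j] at *
    -- evaluate second coordinate at j = 0 and j = 1
    set j0 : Fin k := ⟨0, by omega⟩
    set j1 : Fin k := ⟨1, by omega⟩
    have h0 := congrFun (congrArg WithLp.ofLp (hBA j0)) 1
    have h1 := congrFun (congrArg WithLp.ofLp (hBA j1)) 1
    have hN0 : (N j0) 1 = 0 := by
      rw [hN j0]
      simp [j0]
    have hN1 : (N j1) 1 = Real.sin (2 * π / k) := by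
      rw [hN j1]
      simp [j1]
    have hsinpos : 0 < Real.sin (2 * π / k) := by
      apply Real.sin_pos_of_pos_of_lt_pi
      · positivity
      · rw [div_lt_iff₀ hkpos]
        have hπ := Real.pi_pos
        have : (3:ℝ) ≤ k := by exact_mod_cast hk
        nlinarith
    -- B - A has second coordinate 0 (from j0) so coefficient for j1 is 0
    have hB1 : (B - A) 1 = 0 := by
      have : (B - A) 1 = ((r - ‖V j0 - B‖) • N j0) 1 := h0
      rw [this]
      simp [hN0]
    have hc1 : r - ‖V j1 - B‖ = 0 := by
      have : (B - A) 1 = ((r - ‖V j1 - B‖) • N j1) 1 := h1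
      rw [hB1] at this
      have h2 : (0:ℝ) = (r - ‖V j1 - B‖) * Real.sin (2 * π / k) := by
        rw [this]; simp [hN1]
      rcases mul_eq_zero.mp h2.symm with h | h
      · exact h
      · exact absurd h (ne_of_gt hsinpos)
    -- then B - A = 0, contradiction
    have : B - A = 0 := by
      rw [hBA j1, hc1, zero_smul]
    exact hB (sub_eq_zero.mp this)
  -- conclude
  have hkr : (k:ℝ) * r < ∑ j, ‖B - V j‖ := by
    rw [← hsum]
    obtain ⟨j0, hj0⟩ := hstrict
    exact Finset.sum_lt_sum (fun j _ => hle j) ⟨j0, Finset.mem_univ j0, hj0⟩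
  have hA : ∑ j : Fin k, ‖A - V j‖ = (k:ℝ) * r := by
    have : ∀ j : Fin k, ‖A - V j‖ = r := by
      intro j
      rw [hV j]
      have : A - (A + r • N j) = -(r • N j) := by abel
      rw [this, norm_neg, norm_smul, hNnorm j, Real.norm_eq_abs, abs_of_pos hr, mul_one]
    rw [Finset.sum_congr rfl (fun j _ => this j)]
    simp [mul_comm]
  exact ⟨by rw [hA]; exact hkr, hkr⟩
end

section
/- (Viviani (c)) Let k ≥ 3, r > 0, A ∈ ℝ², and A_j = A + r • (cos(2πj/k), sin(2πj/k)) for j = 0, …, k−1, the vertices of a regular k-gon with center A. For each j let B_j be a point on the segment from A to A_j, i.e., B_j = A + t_j • (A_j − A) with t_j ∈ [0, 1]. Then for every B ∈ ℝ² with B ≠ A, Σ_{j=0}^{k−1} ‖A − B_j‖ < Σ_{j=0}^{k−1} ‖B − B_j‖; that is, A is the Fermat point of B_0, …, B_{k−1}. -/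
open Real

lemma sum_exp_roots (k : ℕ) (hk : 3 ≤ k) :
    ∑ j ∈ Finset.range k, Complex.exp (((2 * π * (j : ℝ) / k : ℝ) : ℂ) * Complex.I) = 0 := by
  have hk0 : k ≠ 0 := by omega
  have hkC : (k : ℂ) ≠ 0 := Nat.cast_ne_zero.mpr hk0
  have hprim := Complex.isPrimitiveRoot_exp k hk0
  have h := hprim.geom_sum_eq_zero (by omega)
  rw [← h]
  apply Finset.sum_congr rfl
  intro j _
  rw [← Complex.exp_nat_mul]
  congr 1
  push_cast
  field_simp

lemma sum_cos_eq (k : ℕ) (hk : 3 ≤ k) :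
    (∑ j ∈ Finset.range k, Real.cos (2 * π * (j : ℝ) / k)) = 0 := by
  have hre := congrArg Complex.re (sum_exp_roots k hk)
  rw [Complex.re_sum, Complex.zero_re] at hre
  rw [← hre]
  exact Finset.sum_congr rfl fun j _ => (Complex.exp_ofReal_mul_I_re _).symm

lemma sum_sin_eq (k : ℕ) (hk : 3 ≤ k) :
    (∑ j ∈ Finset.range k, Real.sin (2 * π * (j : ℝ) / k)) = 0 := by
  have him := congrArg Complex.im (sum_exp_roots k hk)
  rw [Complex.im_sum, Complex.zero_im] at him
  rw [← him]
  exact Finset.sum_congr rfl fun j _ => (Complex.exp_ofReal_mul_I_im _).symm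

open RealInnerProductSpace in
theorem regular_polygon_center_fermat_of_segments (k : ℕ) (hk : 3 ≤ k) (r : ℝ) (hr : 0 < r)
    (A : EuclideanSpace ℝ (Fin 2))
    (N : Fin k → EuclideanSpace ℝ (Fin 2))
    (hN : ∀ j : Fin k,
      N j = ![Real.cos (2 * π * (j : ℝ) / k), Real.sin (2 * π * (j : ℝ) / k)])
    (V : Fin k → EuclideanSpace ℝ (Fin 2))
    (hV : ∀ j : Fin k, V j = A + r • N j)
    (t : Fin k → ℝ) (ht : ∀ j, t j ∈ Set.Icc (0 : ℝ) 1)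
    (B' : Fin k → EuclideanSpace ℝ (Fin 2))
    (hB' : ∀ j, B' j = A + t j • (V j - A)) :
    ∀ B : EuclideanSpace ℝ (Fin 2), B ≠ A →
      (∑ j, ‖A - B' j‖) < (∑ j, ‖B - B' j‖) := by
  intro B hB
  have hNnorm : ∀ j : Fin k, ‖N j‖ = 1 := by
    intro j
    rw [EuclideanSpace.norm_eq, hN j]
    simp only [Fin.sum_univ_two, Matrix.cons_val_zero, Matrix.cons_val_one, Matrix.head_cons,
      Real.norm_eq_abs, sq_abs]
    rw [Real.cos_sq_add_sin_sq, Real.sqrt_one]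
  have hB'A : ∀ j, B' j = A + (t j * r) • N j := by
    intro j
    rw [hB' j, hV j, add_sub_cancel_left, smul_smul]
  set g : Fin k → ℝ := fun j => ⟪A - B, N j⟫ + t j * r with hg
  have hinner : ∀ j, ⟪B' j - B, N j⟫ = g j := by
    intro j
    have h1 : B' j - B = (A - B) + (t j * r) • N j := by rw [hB'A j]; abel
    rw [h1, inner_add_left, real_inner_smul_left, real_inner_self_eq_norm_sq, hNnorm, one_pow,
      mul_one, hg]
  have key : ∀ j, g j ≤ ‖B - B' j‖ := by
    intro j
    calc g j = ⟪B' j - B, N j⟫ := (hinner j).symm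
      _ ≤ ‖B' j - B‖ * ‖N j‖ := real_inner_le_norm _ _
      _ = ‖B - B' j‖ := by rw [hNnorm, mul_one, norm_sub_rev]
  -- sum of inner products with the unit vectors is zero
  have hinner_expand : ∀ (v : EuclideanSpace ℝ (Fin 2)) (j : Fin k),
      ⟪v, N j⟫ = v 0 * Real.cos (2 * π * (j : ℝ) / k) + v 1 * Real.sin (2 * π * (j : ℝ) / k) := by
    intro v j
    simp [PiLp.inner_apply, RCLike.inner_apply, Fin.sum_univ_two, hN j, mul_comm]
  have hinner_sum : (∑ j : Fin k, ⟪A - B, N j⟫) = 0 := by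
    rw [Finset.sum_congr rfl fun j _ => hinner_expand (A - B) j, Finset.sum_add_distrib,
      ← Finset.mul_sum, ← Finset.mul_sum,
      Fin.sum_univ_eq_sum_range (fun j : ℕ => Real.cos (2 * π * (j : ℝ) / k)),
      Fin.sum_univ_eq_sum_range (fun j : ℕ => Real.sin (2 * π * (j : ℝ) / k)),
      sum_cos_eq k hk, sum_sin_eq k hk, mul_zero, mul_zero, add_zero]
  have hAB' : ∀ j, ‖A - B' j‖ = t j * r := by
    intro j
    have h2 : A - B' j = -((t j * r) • N j) := by rw [hB'A j]; abel
    rw [h2, norm_neg, norm_smul, hNnorm, mul_one, Real.norm_eq_abs,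
      abs_of_nonneg (mul_nonneg (ht j).1 hr.le)]
  have hsum_eq : (∑ j, ‖A - B' j‖) = ∑ j, g j := by
    have h3 : (∑ j, g j) = (∑ j : Fin k, ⟪A - B, N j⟫) + ∑ j, t j * r :=
      Finset.sum_add_distrib
    rw [h3, hinner_sum, zero_add]
    exact Finset.sum_congr rfl fun j _ => hAB' j
  -- strictness witness
  have hex : ∃ j ∈ Finset.univ, g j < ‖B - B' j‖ := by
    by_contra hcon
    push_neg at hcon
    have heq : ∀ j : Fin k, B' j - B = ‖B' j - B‖ • N j := by
      intro j
      by_contra hne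
      have hlt : ⟪B' j - B, N j⟫ < ‖B' j - B‖ * ‖N j‖ := by
        rw [inner_lt_norm_mul_iff_real, hNnorm, one_smul]
        exact hne
      rw [hinner j, hNnorm, mul_one, ← norm_sub_rev B (B' j)] at hlt
      exact absurd hlt (not_lt.mpr (hcon j (Finset.mem_univ j)))
    have hBA : ∀ j : Fin k, ∃ s : ℝ, B - A = s • N j := by
      intro j
      refine ⟨t j * r - ‖B' j - B‖, ?_⟩
      have e2 : ‖B' j - B‖ • N j = B' j - B := (heq j).symm
      calc B - A = (B' j - A) - (B' j - B) := by abel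
        _ = (t j * r) • N j - (B' j - B) := by rw [hB'A j, add_sub_cancel_left]
        _ = (t j * r) • N j - ‖B' j - B‖ • N j := by rw [e2]
        _ = (t j * r - ‖B' j - B‖) • N j := (sub_smul _ _ _).symm
    have hkpos : (0 : ℝ) < k := by positivity
    obtain ⟨s0, hs0⟩ := hBA ⟨0, by omega⟩
    obtain ⟨s1, hs1⟩ := hBA ⟨1, by omega⟩
    have hθ : 0 < Real.sin (2 * π / k) := by
      apply Real.sin_pos_of_pos_of_lt_pi
      · positivity
      · rw [div_lt_iff₀ hkpos]
        have h3 : (3 : ℝ) ≤ k := by exact_mod_cast hk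
        nlinarith [Real.pi_pos]
    have h0 := congrArg (fun v : EuclideanSpace ℝ (Fin 2) => v 1) hs0
    have h1 := congrArg (fun v : EuclideanSpace ℝ (Fin 2) => v 1) hs1
    simp only [hN, PiLp.smul_apply, Matrix.cons_val_one, Matrix.head_cons, smul_eq_mul] at h0 h1
    norm_num at h0 h1
    -- h0 : (B - A) 1 = 0, h1 : (B - A) 1 = s1 * sin (2π/k)
    have hs1z : s1 = 0 := by
      have hmul := h1.symm.trans h0
      rcases mul_eq_zero.mp hmul with h | h
      · exact h
      · exact absurd h (ne_of_gt hθ)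
    have : B - A = 0 := by rw [hs1, hs1z, zero_smul]
    exact hB (sub_eq_zero.mp this)
  calc (∑ j, ‖A - B' j‖) = ∑ j, g j := hsum_eq
    _ < ∑ j, ‖B - B' j‖ := Finset.sum_lt_sum (fun j _ => key j) hex
end

section
/- (Classical Viviani theorem) Let A, B, C be the vertices of an equilateral triangle in ℝ² with side length s > 0 (‖A − B‖ = ‖B − C‖ = ‖C − A‖ = s). Then for every point P in the convex hull of {A, B, C}, the sum of the distances from P to the three lines through B and C, through C and A, and through A and B equals (√3/2)·s, the altitude of the triangle. -/
open RealInnerProductSpace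

variable {E : Type*} [NormedAddCommGroup E] [InnerProductSpace ℝ E]

/-- Distance from a point to the line through `B` and `C` via orthogonal projection. -/
lemma viviani_infDist_line (P B C : E) :
    Metric.infDist P (affineSpan ℝ ({B, C} : Set E) : Set E)
      = ‖(P - B) - (⟪P - B, C - B⟫ / ‖C - B‖ ^ 2) • (C - B)‖ := by
  set v := C - B with hv
  set w := P - B with hw
  set c : ℝ := ⟪w, v⟫ / ‖v‖ ^ 2 with hc
  have horth : ⟪w - c • v, v⟫ = 0 := by
    rcases eq_or_ne v 0 with h | h
    · simp [h]
    · have hnv : ‖v‖ ^ 2 ≠ 0 := pow_ne_zero _ (norm_ne_zero_iff.mpr h)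
      rw [inner_sub_left, real_inner_smul_left, real_inner_self_eq_norm_sq]
      rw [hc, div_mul_cancel₀ _ hnv, sub_self]
  have hmem : ∀ X : E, X ∈ (affineSpan ℝ ({B, C} : Set E) : Set E) ↔
      ∃ t : ℝ, X = t • v + B := by
    intro X
    constructor
    · intro hX
      have : (X - B) +ᵥ B ∈ affineSpan ℝ ({B, C} : Set E) := by
        simpa using hX
      rw [vadd_left_mem_affineSpan_pair] at this
      obtain ⟨r, hr⟩ := this
      exact ⟨r, by rw [hv]; simp at hr ⊢; rw [hr]; abel⟩
    · rintro ⟨t, rfl⟩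
      have := vadd_left_mem_affineSpan_pair (k := ℝ) (p₁ := B) (p₂ := C)
        (v := t • v)
      simp only [vsub_eq_sub, ← hv] at this
      have h2 := this.mpr ⟨t, rfl⟩
      simpa using h2
  have hQmem : (c • v + B) ∈ (affineSpan ℝ ({B, C} : Set E) : Set E) := (hmem _).mpr ⟨c, rfl⟩
  have hne : (affineSpan ℝ ({B, C} : Set E) : Set E).Nonempty := ⟨_, hQmem⟩
  apply le_antisymm
  · calc Metric.infDist P (affineSpan ℝ ({B, C} : Set E) : Set E)
        ≤ dist P (c • v + B) := Metric.infDist_le_dist_of_mem hQmem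
      _ = ‖w - c • v‖ := by rw [dist_eq_norm, hw]; congr 1; abel
  · refine le_of_not_gt fun hlt => ?_
    obtain ⟨X, hX, hdX⟩ := (Metric.infDist_lt_iff hne).mp hlt
    obtain ⟨t, rfl⟩ := (hmem X).mp hX
    rw [dist_eq_norm] at hdX
    have hPX : P - (t • v + B) = (w - c • v) + (c - t) • v := by
      rw [hw]; rw [sub_smul]; abel
    rw [hPX] at hdX
    have hexp : ‖(w - c • v) + (c - t) • v‖ ^ 2
        = ‖w - c • v‖ ^ 2 + ‖(c - t) • v‖ ^ 2 := by
      rw [norm_add_sq_real, real_inner_smul_right, horth]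
      ring
    nlinarith [norm_nonneg ((w - c • v) + (c - t) • v), norm_nonneg (w - c • v),
      norm_nonneg ((c - t) • v), sq_nonneg ‖(c - t) • v‖]

/-- Key: distance from a convex combination to the line through the latter two points. -/
lemma viviani_key (X Y Z : E) (s a b c : ℝ) (hs : 0 < s)
    (hXY : ‖X - Y‖ = s) (hYZ : ‖Y - Z‖ = s) (hZX : ‖Z - X‖ = s)
    (ha : 0 ≤ a) (habc : a + b + c = 1) :
    Metric.infDist (a • X + b • Y + c • Z) (affineSpan ℝ ({Y, Z} : Set E) : Set E)
      = a * (Real.sqrt 3 / 2 * s) := by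
  set P : E := a • X + b • Y + c • Z with hP
  set u : E := X - Y with hu
  set v : E := Z - Y with hv
  have hnu : ‖u‖ = s := hXY
  have hnv : ‖v‖ = s := by rw [hv, ← hYZ, ← norm_neg]; congr 1; abel
  have huv : ‖u - v‖ = s := by
    rw [hu, hv, ← hZX, ← norm_neg]; congr 1; abel
  have hinner : ⟪u, v⟫ = s ^ 2 / 2 := by
    have h2 : ‖u - v‖ ^ 2 = ‖u‖ ^ 2 - 2 * ⟪u, v⟫ + ‖v‖ ^ 2 := norm_sub_sq_real u v
    rw [hnu, hnv, huv] at h2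
    linarith
  have hw : P - Y = a • u + c • v := by
    have hb : b = 1 - a - c := by linarith
    rw [hP, hu, hv, hb]
    simp only [smul_sub, sub_smul, one_smul]
    abel
  rw [viviani_infDist_line]
  rw [hw]
  have hvv : ‖v‖ ^ 2 = s ^ 2 := by rw [hnv]
  have hs2 : s ^ 2 ≠ 0 := by positivity
  have hcoef : ⟪a • u + c • v, v⟫ / ‖v‖ ^ 2 = a / 2 + c := by
    rw [inner_add_left, real_inner_smul_left, real_inner_smul_left,
      real_inner_self_eq_norm_sq, hinner, hvv]
    field_simp
  rw [hcoef]
  have hvec : (a • u + c • v) - (a / 2 + c) • v = a • (u - (1/2 : ℝ) • v) := by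
    module
  rw [hvec, norm_smul, Real.norm_eq_abs, abs_of_nonneg ha]
  congr 1
  have hsq : ‖u - (1/2 : ℝ) • v‖ ^ 2 = 3 / 4 * s ^ 2 := by
    rw [norm_sub_sq_real, real_inner_smul_right, norm_smul, hinner, hnu, hnv]
    simp [Real.norm_eq_abs]
    ring
  have h34 : Real.sqrt 3 / 2 * s = Real.sqrt (3 / 4 * s ^ 2) := by
    have h3 : Real.sqrt 3 ^ 2 = 3 := Real.sq_sqrt (by norm_num)
    rw [show (3:ℝ) / 4 * s ^ 2 = (Real.sqrt 3 / 2 * s) ^ 2 by rw [mul_pow, div_pow, h3]; ring,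
      Real.sqrt_sq (by positivity)]
  rw [h34, ← hsq, Real.sqrt_sq (norm_nonneg _)]

theorem viviani_classical (A B C : EuclideanSpace ℝ (Fin 2)) (s : ℝ) (hs : 0 < s)
    (hAB : ‖A - B‖ = s) (hBC : ‖B - C‖ = s) (hCA : ‖C - A‖ = s) :
    ∀ P ∈ convexHull ℝ ({A, B, C} : Set (EuclideanSpace ℝ (Fin 2))),
      Metric.infDist P (affineSpan ℝ ({B, C} : Set (EuclideanSpace ℝ (Fin 2))) : Set (EuclideanSpace ℝ (Fin 2)))
        + Metric.infDist P (affineSpan ℝ ({C, A} : Set (EuclideanSpace ℝ (Fin 2))) : Set (EuclideanSpace ℝ (Fin 2)))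
        + Metric.infDist P (affineSpan ℝ ({A, B} : Set (EuclideanSpace ℝ (Fin 2))) : Set (EuclideanSpace ℝ (Fin 2)))
        = Real.sqrt 3 / 2 * s := by
  intro P hP
  rw [show ({A, B, C} : Set (EuclideanSpace ℝ (Fin 2))) = insert A {B, C} from rfl,
    convexHull_insert ⟨B, by simp⟩, convexHull_pair, mem_convexJoin] at hP
  obtain ⟨A', hA', Q, hQ, hPseg⟩ := hP
  rw [Set.mem_singleton_iff] at hA'
  rw [hA'] at hPseg
  obtain ⟨u', v', hu', hv', huv', rfl⟩ := hQ
  obtain ⟨a, b, ha, hb, hab, rfl⟩ := hPseg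
  set P : EuclideanSpace ℝ (Fin 2) := a • A + b • (u' • B + v' • C) with hPdef
  have hP1 : P = a • A + (b * u') • B + (b * v') • C := by
    rw [hPdef, smul_add, smul_smul, smul_smul]; abel
  have h1 : Metric.infDist P (affineSpan ℝ ({B, C} : Set (EuclideanSpace ℝ (Fin 2))) : Set (EuclideanSpace ℝ (Fin 2)))
      = a * (Real.sqrt 3 / 2 * s) := by
    rw [hP1]
    exact viviani_key A B C s a (b * u') (b * v') hs hAB hBC hCA ha (by nlinarith)
  have hP2 : P = (b * u') • B + (b * v') • C + a • A := by rw [hP1]; abel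
  have h2 : Metric.infDist P (affineSpan ℝ ({C, A} : Set (EuclideanSpace ℝ (Fin 2))) : Set (EuclideanSpace ℝ (Fin 2)))
      = (b * u') * (Real.sqrt 3 / 2 * s) := by
    rw [hP2]
    exact viviani_key B C A s (b * u') (b * v') a hs hBC hCA hAB
      (mul_nonneg hb hu') (by nlinarith)
  have hP3 : P = (b * v') • C + a • A + (b * u') • B := by rw [hP1]; abel
  have h3 : Metric.infDist P (affineSpan ℝ ({A, B} : Set (EuclideanSpace ℝ (Fin 2))) : Set (EuclideanSpace ℝ (Fin 2)))
      = (b * v') * (Real.sqrt 3 / 2 * s) := by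
    rw [hP3]
    exact viviani_key C A B s (b * v') a (b * u') hs hCA hAB hBC
      (mul_nonneg hb hv') (by nlinarith)
  rw [h1, h2, h3]
  have : a + b * u' + b * v' = 1 := by nlinarith
  linear_combination (Real.sqrt 3 / 2 * s) * this
end
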